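/- Let k be a field of characteristic ≠ 2 and (V,Q) an n-dimensional quadratic space over k admitting a basis v₁, …, v_n with B(v_i, v_j) = 0 for i ≠ j and Q(v_i) ≠ 0 for all i. Set δ = ι(v₁)⋯ι(v_n) in the Clifford algebra C_V. If n is even, the center of C_V equals k·1 (the scalars); if n is odd, the center of C_V equals k·1 + k·δ (the k-span of 1 and δ). -/

import Mathlib

section CliffordCenterAux

open CliffordAlgebra

variable {k V : Type*} [Field k] [AddCommGroup V] [Module k V]
variable (Q : QuadraticForm k V) {n : ℕ} (b : Module.Basis (Fin n) k V)

/-- monomial: product of `ι (b i)` over a list of indices. -/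
noncomputable def cmon (l : List (Fin n)) : CliffordAlgebra Q :=
  (l.map fun i => ι Q (b i)).prod

lemma cmon_nil : cmon Q b [] = 1 := rfl

lemma cmon_cons (a : Fin n) (l : List (Fin n)) :
    cmon Q b (a :: l) = ι Q (b a) * cmon Q b l := by
  simp [cmon]

variable (horth : ∀ i j, i ≠ j → QuadraticMap.polar Q (b i) (b j) = 0)

include horth in
lemma e_anticomm {i j : Fin n} (h : i ≠ j) :
    ι Q (b i) * ι Q (b j) = -(ι Q (b j) * ι Q (b i)) := by
  rw [ι_mul_ι_comm, horth i j h, map_zero, zero_sub]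

/-- number of entries of `l` distinct from `i` -/
def cnt (l : List (Fin n)) (i : Fin n) : ℕ := l.countP (fun j => decide (j ≠ i))

include horth in
/-- sign lemma: moving `ι (b i)` across a monomial. -/
lemma e_mul_cmon (i : Fin n) (l : List (Fin n)) :
    ι Q (b i) * cmon Q b l = ((-1 : k) ^ (cnt l i)) • (cmon Q b l * ι Q (b i)) := by
  induction l with
  | nil => simp [cmon_nil, cnt]
  | cons a l ih =>
    rw [cmon_cons]
    by_cases hai : a = i
    · subst hai
      have hc : cnt (a :: l) a = cnt l a := by
        simp [cnt, List.countP_cons]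
      rw [hc]
      conv_lhs => rw [ih]
      rw [mul_smul_comm, mul_assoc]
    · have hc : cnt (a :: l) i = cnt l i + 1 := by
        simp [cnt, List.countP_cons, hai]
      rw [hc, ← mul_assoc, e_anticomm Q b horth (fun h => hai h.symm), neg_mul,
        mul_assoc, ih, mul_smul_comm, pow_succ, ← mul_assoc, mul_neg_one,
        neg_smul]

/-- the averaging operator for index `i` -/
noncomputable def Pav (i : Fin n) :
    CliffordAlgebra Q →ₗ[k] CliffordAlgebra Q :=
  (2⁻¹ : k) • (LinearMap.id +
    (Q (b i))⁻¹ • ((LinearMap.mulLeft k (ι Q (b i))).comp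
      (LinearMap.mulRight k (ι Q (b i)))))

lemma Pav_apply (i : Fin n) (x : CliffordAlgebra Q) :
    Pav Q b i x =
      (2⁻¹ : k) • (x + (Q (b i))⁻¹ • (ι Q (b i) * (x * ι Q (b i)))) := rfl

variable (hchar : (2 : k) ≠ 0) (hQ : ∀ i, Q (b i) ≠ 0)

include hchar hQ in
lemma Pav_central {x : CliffordAlgebra Q}
    (hx : ∀ y, y * x = x * y) (i : Fin n) : Pav Q b i x = x := by
  have h : ι Q (b i) * (x * ι Q (b i)) = Q (b i) • x := by
    rw [← hx, ← mul_assoc, ι_sq_scalar, ← Algebra.smul_def]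
  rw [Pav_apply, h, smul_smul, inv_mul_cancel₀ (hQ i), one_smul,
    ← two_smul k x, smul_smul, inv_mul_cancel₀ hchar, one_smul]

include horth hchar hQ in
lemma Pav_cmon (i : Fin n) (l : List (Fin n)) :
    Pav Q b i (cmon Q b l) =
      (if Even (cnt l i) then (1 : k) else 0) • cmon Q b l := by
  rw [Pav_apply]
  have h1 : ι Q (b i) * (cmon Q b l * ι Q (b i)) =
      (((-1 : k) ^ cnt l i) * Q (b i)) • cmon Q b l := by
    rw [← mul_assoc, e_mul_cmon Q b horth, smul_mul_assoc, mul_assoc,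
      ι_sq_scalar, ← Algebra.commutes, ← Algebra.smul_def, smul_smul]
  have h2 : (Q (b i))⁻¹ * ((-1 : k) ^ cnt l i * Q (b i)) = (-1 : k) ^ cnt l i := by
    rw [mul_comm ((-1:k) ^ cnt l i) (Q (b i)), ← mul_assoc,
      inv_mul_cancel₀ (hQ i), one_mul]
  have h3 : cmon Q b l + ((-1 : k) ^ cnt l i) • cmon Q b l =
      (1 + (-1 : k) ^ cnt l i) • cmon Q b l := by
    rw [add_smul, one_smul]
  rw [h1, smul_smul, h2, h3, smul_smul]
  congr 1
  rcases Nat.even_or_odd (cnt l i) with h | h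
  · rw [if_pos h, h.neg_one_pow, one_add_one_eq_two, inv_mul_cancel₀ hchar]
  · rw [if_neg (Nat.not_even_iff_odd.mpr h), h.neg_one_pow]
    ring

/-- the full averaging operator over a list of indices, as product of endomorphisms -/
noncomputable def PavL (L : List (Fin n)) : Module.End k (CliffordAlgebra Q) :=
  (L.map (Pav Q b)).prod

include hchar hQ in
lemma PavL_central {x : CliffordAlgebra Q}
    (hx : ∀ y, y * x = x * y) (L : List (Fin n)) : PavL Q b L x = x := by
  induction L with
  | nil => rfl
  | cons a L ih =>
    show (Pav Q b a * PavL Q b L) x = x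
    rw [Module.End.mul_apply, ih, Pav_central Q b hchar hQ hx]

include horth hchar hQ in
lemma PavL_cmon (L : List (Fin n)) (l : List (Fin n)) :
    PavL Q b L (cmon Q b l) =
      (if ∀ i ∈ L, Even (cnt l i) then (1 : k) else 0) • cmon Q b l := by
  induction L with
  | nil => simp [PavL]
  | cons a L ih =>
    show (Pav Q b a * PavL Q b L) (cmon Q b l) = _
    rw [Module.End.mul_apply, ih]
    by_cases hL : ∀ i ∈ L, Even (cnt l i)
    · rw [if_pos hL, one_smul, Pav_cmon Q b horth hchar hQ]
      by_cases ha : Even (cnt l a)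
      · rw [if_pos ha, if_pos]
        intro i hi
        rcases List.mem_cons.mp hi with h | h
        · exact h ▸ ha
        · exact hL i h
      · rw [if_neg ha, if_neg]
        intro h
        exact ha (h a (List.mem_cons_self (a := a) (l := L)))
    · rw [if_neg hL, zero_smul, map_zero, if_neg, zero_smul]
      intro h
      exact hL fun i hi => h i (List.mem_cons_of_mem a hi)

lemma cnt_of_not_mem {l : List (Fin n)} {i : Fin n} (h : i ∉ l) :
    cnt l i = l.length := by
  apply List.countP_eq_length.mpr
  intro a ha
  simp only [decide_eq_true_eq]
  exact fun hai => h (hai ▸ ha)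

lemma cnt_of_mem {l : List (Fin n)} (hl : l.Nodup) {i : Fin n} (h : i ∈ l) :
    cnt l i + 1 = l.length := by
  induction l with
  | nil => simp at h
  | cons a l ih =>
    rcases List.mem_cons.mp h with rfl | h'
    · have hnotmem : i ∉ l := (List.nodup_cons.mp hl).1
      have h0 : cnt l i = l.length := cnt_of_not_mem hnotmem
      have h1 : cnt (i :: l) i = cnt l i := by simp [cnt, List.countP_cons]
      simp [h1, h0]
    · have hai : a ≠ i := fun hh => (List.nodup_cons.mp hl).1 (hh ▸ h')
      have hih := ih (List.nodup_cons.mp hl).2 h'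
      have h1 : cnt (a :: l) i = cnt l i + 1 := by
        simp [cnt, List.countP_cons, hai]
      simp only [h1, List.length_cons]
      omega

/-- characterization of monomials fixed by all averaging operators -/
lemma good_iff {l : List (Fin n)} (hl : l.Pairwise (· < ·)) :
    (∀ i : Fin n, Even (cnt l i)) ↔
      (l = [] ∨ (Odd n ∧ l = List.finRange n)) := by
  have hnd : l.Nodup := hl.nodup
  constructor
  · intro hgood
    rcases List.eq_nil_or_concat l with rfl | ⟨l', a, rfl⟩
    · exact Or.inl rfl
    · set L := l'.concat a with hL
      have hmem : a ∈ L := by simp [hL]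
      have hlen1 : cnt L a + 1 = L.length := cnt_of_mem hnd hmem
      have hfull : ∀ i : Fin n, i ∈ L := by
        by_contra hcon
        push_neg at hcon
        obtain ⟨i, hi⟩ := hcon
        have h2 : cnt L i = L.length := cnt_of_not_mem hi
        obtain ⟨p, hp⟩ := hgood a
        obtain ⟨q, hq⟩ := hgood i
        omega
      right
      have h1 : L.length ≤ n := by
        simpa using List.Nodup.length_le_card hnd
      have h2 : n ≤ L.length := by
        have hsub : List.Subperm (List.finRange n) L :=
          List.subperm_of_subset (List.nodup_finRange n) (fun x _ => hfull x)
        simpa using hsub.length_le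
      have hlenn : L.length = n := le_antisymm h1 h2
      have hperm : L.Perm (List.finRange n) := by
        have hsub : List.Subperm L (List.finRange n) :=
          List.subperm_of_subset hnd (fun x _ => List.mem_finRange x)
        exact hsub.perm_of_length_le (by simp [hlenn])
      have heq : L = List.finRange n := by
        haveI : IsAntisymm (Fin n) (· ≤ ·) := ⟨fun a b h1 h2 => le_antisymm h1 h2⟩
        refine List.Perm.eq_of_pairwise (le := (· ≤ ·)) (fun a b _ _ h1 h2 => le_antisymm h1 h2) ?_ ?_ hperm
        · exact hl.imp le_of_lt
        · exact (List.pairwise_lt_finRange n).imp le_of_lt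
      refine ⟨?_, heq⟩
      obtain ⟨c, hc⟩ := hgood a
      exact ⟨c, by omega⟩
  · rintro (rfl | ⟨hodd, rfl⟩)
    · intro i; simp [cnt]
    · intro i
      have h1 : cnt (List.finRange n) i + 1 = n := by
        simpa using cnt_of_mem (List.nodup_finRange n) (List.mem_finRange i)
      obtain ⟨c, hc⟩ := hodd
      exact ⟨c, by omega⟩

/-- the span of the sorted monomials -/
noncomputable def cM : Submodule k (CliffordAlgebra Q) :=
  Submodule.span k
    {x | ∃ l : List (Fin n), l.Pairwise (· < ·) ∧ x = cmon Q b l}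

include horth in
lemma mul_cmon_straighten (j : Fin n) :
    ∀ l : List (Fin n), l.Pairwise (· < ·) →
      ∃ (c : k) (l₂ : List (Fin n)), l₂.Pairwise (· < ·) ∧
        (∀ x ∈ l₂, x = j ∨ x ∈ l) ∧
        ι Q (b j) * cmon Q b l = c • cmon Q b l₂ := by
  intro l
  induction l with
  | nil =>
    intro _
    exact ⟨1, [j], List.pairwise_singleton _ j, by simp,
      by simp [cmon_nil, cmon_cons]⟩
  | cons a l ih =>
    intro hs
    have hs' : l.Pairwise (· < ·) := hs.of_cons
    rcases lt_trichotomy j a with hlt | rfl | hgt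
    · refine ⟨1, j :: a :: l, ?_, ?_, by simp [cmon_cons]⟩
      · refine List.pairwise_cons.mpr ⟨?_, hs⟩
        intro x hx
        rcases List.mem_cons.mp hx with rfl | hx'
        · exact hlt
        · exact hlt.trans (List.rel_of_pairwise_cons hs hx')
      · intro x hx
        rcases List.mem_cons.mp hx with rfl | hx'
        · exact Or.inl rfl
        · exact Or.inr hx'
    · refine ⟨Q (b j), l, hs', fun x hx => Or.inr (List.mem_cons_of_mem _ hx), ?_⟩
      rw [cmon_cons, ← mul_assoc, ι_sq_scalar, ← Algebra.smul_def]
    · obtain ⟨c, l₂, hl₂s, hl₂m, hmul⟩ := ih hs'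
      have hal₂ : ∀ x ∈ l₂, a < x := by
        intro x hx
        rcases hl₂m x hx with rfl | hx'
        · exact hgt
        · exact List.rel_of_pairwise_cons hs hx'
      refine ⟨-c, a :: l₂, List.pairwise_cons.mpr ⟨hal₂, hl₂s⟩, ?_, ?_⟩
      · intro x hx
        rcases List.mem_cons.mp hx with h | hx'
        · exact Or.inr (by rw [h]; exact List.mem_cons_self (a := a) (l := l))
        · rcases hl₂m x hx' with h | h
          · exact Or.inl h
          · exact Or.inr (List.mem_cons_of_mem _ h)
      · rw [cmon_cons, ← mul_assoc, e_anticomm Q b horth (ne_of_gt hgt),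
          neg_mul, mul_assoc, hmul, cmon_cons, mul_smul_comm, neg_smul]

include horth in
lemma e_mul_mem_cM (j : Fin n) {x : CliffordAlgebra Q} (hx : x ∈ cM Q b) :
    ι Q (b j) * x ∈ cM Q b := by
  induction hx using Submodule.span_induction with
  | mem x hx =>
    obtain ⟨l, hls, rfl⟩ := hx
    obtain ⟨c, l₂, hl₂s, _, hmul⟩ := mul_cmon_straighten Q b horth j l hls
    rw [hmul]
    exact Submodule.smul_mem _ _ (Submodule.subset_span ⟨l₂, hl₂s, rfl⟩)
  | zero => simp
  | add x y _ _ hx hy => rw [mul_add]; exact Submodule.add_mem _ hx hy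
  | smul c x _ hx => rw [mul_smul_comm]; exact Submodule.smul_mem _ _ hx

include horth in
lemma iota_mul_mem_cM (v : V) {x : CliffordAlgebra Q} (hx : x ∈ cM Q b) :
    ι Q v * x ∈ cM Q b := by
  have hv : (ι Q) v = ∑ i : Fin n, b.repr v i • ι Q (b i) := by
    conv_lhs => rw [← b.sum_repr v]
    rw [map_sum]
    simp
  rw [hv, Finset.sum_mul]
  refine Submodule.sum_mem _ fun i _ => ?_
  rw [smul_mul_assoc]
  exact Submodule.smul_mem _ _ (e_mul_mem_cM Q b horth i hx)

include horth in
lemma cM_eq_top : cM Q b = ⊤ := by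
  rw [eq_top_iff]
  intro x _
  have key : ∀ y : CliffordAlgebra Q, ∀ z ∈ cM Q b, y * z ∈ cM Q b := by
    intro y
    induction y using CliffordAlgebra.induction with
    | algebraMap r =>
      intro z hz
      rw [← Algebra.smul_def]
      exact Submodule.smul_mem _ _ hz
    | ι v => intro z hz; exact iota_mul_mem_cM Q b horth v hz
    | mul a c ha hc => intro z hz; rw [mul_assoc]; exact ha _ (hc _ hz)
    | add a c ha hc => intro z hz; rw [add_mul]; exact Submodule.add_mem _ (ha _ hz) (hc _ hz)
  have h1 : (1 : CliffordAlgebra Q) ∈ cM Q b :=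
    Submodule.subset_span ⟨[], List.Pairwise.nil, rfl⟩
  simpa using key x 1 h1

include horth in
lemma delta_commutes (hodd : Odd n) (j : Fin n) :
    ι Q (b j) * cmon Q b (List.finRange n) =
      cmon Q b (List.finRange n) * ι Q (b j) := by
  rw [e_mul_cmon Q b horth]
  have h1 : cnt (List.finRange n) j + 1 = n := by
    simpa using cnt_of_mem (List.nodup_finRange n) (List.mem_finRange j)
  have heven : Even (cnt (List.finRange n) j) := by
    rcases hodd with ⟨c, hc⟩; exact ⟨c, by omega⟩
  rw [heven.neg_one_pow, one_smul]

include horth in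
lemma mem_center_of_basis_commutes {z : CliffordAlgebra Q}
    (hz : ∀ j : Fin n, ι Q (b j) * z = z * ι Q (b j)) :
    z ∈ Subalgebra.center k (CliffordAlgebra Q) := by
  rw [Subalgebra.mem_center_iff]
  intro y
  induction y using CliffordAlgebra.induction with
  | algebraMap r => rw [← Algebra.commutes]
  | ι v =>
    have hv : (ι Q) v = ∑ i : Fin n, b.repr v i • ι Q (b i) := by
      conv_lhs => rw [← b.sum_repr v]
      rw [map_sum]; simp
    rw [hv, Finset.sum_mul, Finset.mul_sum]
    refine Finset.sum_congr rfl fun i _ => ?_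
    rw [smul_mul_assoc, mul_smul_comm, hz i]
  | mul a c ha hc => rw [mul_assoc, hc, ← mul_assoc, ha, mul_assoc]
  | add a c ha hc => rw [add_mul, mul_add, ha, hc]

end CliffordCenterAux

/-- The center of the Clifford algebra of an `n`-dimensional quadratic space with
orthogonal basis `v₁, …, v_n` (all `Q(v_i) ≠ 0`) over a field of characteristic `≠ 2`:
it is `k·1` if `n` is even, and `k·1 + k·δ` with `δ = ι(v₁)⋯ι(v_n)` if `n` is odd. -/
theorem clifford_center {k V : Type*} [Field k] [AddCommGroup V] [Module k V]
    (hchar : (2 : k) ≠ 0)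
    (Q : QuadraticForm k V)
    (n : ℕ) (b : Module.Basis (Fin n) k V)
    (horth : ∀ i j, i ≠ j → QuadraticMap.polar Q (b i) (b j) = 0)
    (hQ : ∀ i, Q (b i) ≠ 0) :
    (Even n → ∀ x : CliffordAlgebra Q,
      x ∈ Subalgebra.center k (CliffordAlgebra Q) ↔
        ∃ a : k, x = algebraMap k (CliffordAlgebra Q) a) ∧
    (Odd n → ∀ x : CliffordAlgebra Q,
      x ∈ Subalgebra.center k (CliffordAlgebra Q) ↔
        ∃ a c : k, x = algebraMap k (CliffordAlgebra Q) a +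
          c • (List.ofFn fun i => CliffordAlgebra.ι Q (b i)).prod) := by
  have hdelta : (List.ofFn fun i => CliffordAlgebra.ι Q (b i)).prod =
      cmon Q b (List.finRange n) := by
    rw [cmon, List.ofFn_eq_map]
  -- central elements lie in the span of `1` and (if `n` is odd) `δ`
  have key : ∀ (T : Set (CliffordAlgebra Q)), (1 : CliffordAlgebra Q) ∈ T →
      (Odd n → cmon Q b (List.finRange n) ∈ T) →
      ∀ x ∈ Subalgebra.center k (CliffordAlgebra Q), x ∈ Submodule.span k T := by
    intro T hT1 hTd x hx
    have hxc : ∀ y, y * x = x * y := Subalgebra.mem_center_iff.mp hx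
    have hxM : x ∈ cM Q b := by rw [cM_eq_top Q b horth]; trivial
    have hPx : PavL Q b (List.finRange n) x = x :=
      PavL_central Q b hchar hQ hxc (List.finRange n)
    rw [← hPx]
    clear hPx hxc hx
    induction hxM using Submodule.span_induction with
    | mem z hz =>
      obtain ⟨l, hls, rfl⟩ := hz
      rw [PavL_cmon Q b horth hchar hQ]
      by_cases hgood : ∀ i ∈ List.finRange n, Even (cnt l i)
      · rw [if_pos hgood, one_smul]
        have hgood' : ∀ i : Fin n, Even (cnt l i) :=
          fun i => hgood i (List.mem_finRange i)
        rcases (good_iff hls).mp hgood' with rfl | ⟨hodd, rfl⟩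
        · exact Submodule.subset_span (by simpa [cmon_nil] using hT1)
        · exact Submodule.subset_span (hTd hodd)
      · rw [if_neg hgood, zero_smul]; exact Submodule.zero_mem _
    | zero => simp
    | add z w _ _ hz hw => rw [map_add]; exact Submodule.add_mem _ hz hw
    | smul c z _ hz => rw [map_smul]; exact Submodule.smul_mem _ _ hz
  constructor
  · -- even case
    intro he x
    constructor
    · intro hx
      have hsp := key {1} rfl (fun ho => absurd he (Nat.not_even_iff_odd.mpr ho)) x hx
      rw [Submodule.mem_span_singleton] at hsp
      obtain ⟨a, ha⟩ := hsp
      exact ⟨a, by rw [← ha, Algebra.algebraMap_eq_smul_one]⟩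
    · rintro ⟨a, rfl⟩
      exact Subalgebra.algebraMap_mem _ a
  · -- odd case
    intro ho x
    have hdc : cmon Q b (List.finRange n) ∈
        Subalgebra.center k (CliffordAlgebra Q) :=
      mem_center_of_basis_commutes Q b horth
        (fun j => delta_commutes Q b horth ho j)
    constructor
    · intro hx
      have hsp := key {1, cmon Q b (List.finRange n)} (Or.inl rfl)
        (fun _ => Or.inr rfl) x hx
      rw [Submodule.mem_span_pair] at hsp
      obtain ⟨a, c, hac⟩ := hsp
      refine ⟨a, c, ?_⟩
      rw [← hac, hdelta, Algebra.algebraMap_eq_smul_one]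
    · rintro ⟨a, c, rfl⟩
      refine Subalgebra.add_mem _ (Subalgebra.algebraMap_mem _ a) ?_
      rw [hdelta]
      exact Subalgebra.smul_mem _ hdc c
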